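/- Let G be a group equipped with a pre-topology τ such that: (a) (G, τ) is T1; (b) multiplication is pre-continuous, i.e., for all x, y ∈ G and every open W containing xy there exist open sets U ∋ x and V ∋ y with U·V ⊆ W; (c) inversion is pre-continuous, i.e., for every x ∈ G and every open W containing x⁻¹ there is an open U ∋ x with U⁻¹ ⊆ W; (d) there is a neighborhood pre-base ℬ_e at the identity e (a family of open sets containing e such that every open set containing e contains a member of ℬ_e) with B = B⁻¹ for every B ∈ ℬ_e and such that for every U ∈ ℬ_e there exists V ∈ ℬ_e with V·V ⊆ U. Then (G, τ) is a completely regular pre-topological space. -/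

import Mathlib

open Set Pointwise

variable {X : Type*}

/-- The inverse `U⁻¹ = {(y,x) : (x,y) ∈ U}` of a relation on `X`. -/
def preInv (U : Set (X × X)) : Set (X × X) := {p | (p.2, p.1) ∈ U}

/-- The composition `U ∘ V = {(x,y) : ∃ z, (x,z) ∈ U ∧ (z,y) ∈ V}`. -/
def preComp (U V : Set (X × X)) : Set (X × X) :=
  {p | ∃ z, (p.1, z) ∈ U ∧ (z, p.2) ∈ V}

/-- The ball `U[x] = {y : (x,y) ∈ U}`. -/
def uball (U : Set (X × X)) (x : X) : Set X := {y | (x, y) ∈ U}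

/-- A pre-uniformity on `X`: a family `μ` of subsets of `X × X` satisfying (U1)-(U5). -/
structure IsPreUniformity (μ : Set (Set (X × X))) : Prop where
  diag_subset : ∀ U ∈ μ, Set.diagonal X ⊆ U
  inv_mem : ∀ U ∈ μ, preInv U ∈ μ
  comp_mem : ∀ U ∈ μ, ∃ V ∈ μ, ∃ W ∈ μ, preComp V W ⊆ U
  superset_mem : ∀ U ∈ μ, ∀ V : Set (X × X), U ⊆ V → V ∈ μ
  sInter_eq : ⋂₀ μ = Set.diagonal X

/-- (U2'): every entourage contains a symmetric entourage. -/
def SymmetricallyPreUniform (μ : Set (Set (X × X))) : Prop :=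
  ∀ U ∈ μ, ∃ V ∈ μ, V ⊆ U ∧ preInv V = V

/-- (U3'): every entourage `U` admits `V ∈ μ` with `V ∘ V ⊆ U`. -/
def StronglyPreUniform (μ : Set (Set (X × X))) : Prop :=
  ∀ U ∈ μ, ∃ V ∈ μ, preComp V V ⊆ U

/-- The pre-topology `τ(μ)` induced by a pre-uniformity `μ`. -/
def preTop (μ : Set (Set (X × X))) : Set (Set X) :=
  {G | ∀ x ∈ G, ∃ U ∈ μ, uball U x ⊆ G}

/-- A pre-topology on `X`: a family of subsets covering `X` closed under arbitrary unions. -/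
def IsPreTopology (τ : Set (Set X)) : Prop :=
  ⋃₀ τ = Set.univ ∧ ∀ S : Set (Set X), S ⊆ τ → ⋃₀ S ∈ τ

/-- Interior with respect to a pre-topology. -/
def pInterior (τ : Set (Set X)) (A : Set X) : Set X :=
  ⋃₀ {W | W ∈ τ ∧ W ⊆ A}

/-- Closure with respect to a pre-topology: the smallest closed set containing `A`. -/
def pClosure (τ : Set (Set X)) (A : Set X) : Set X :=
  ⋂₀ {C | A ⊆ C ∧ Cᶜ ∈ τ}

/-- T1 separation for a pre-topology. -/
def IsT1 (τ : Set (Set X)) : Prop :=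
  ∀ x y : X, x ≠ y → (∃ V ∈ τ, x ∈ V ∧ y ∉ V) ∧ (∃ W ∈ τ, y ∈ W ∧ x ∉ W)

/-- Complete regularity for a pre-topology: T1, and points can be separated from closed
sets by pre-continuous maps into the unit interval. -/
def IsCompletelyRegular (τ : Set (Set X)) : Prop :=
  IsT1 τ ∧ ∀ (x : X) (C : Set X), Cᶜ ∈ τ → x ∉ C →
    ∃ f : X → unitInterval,
      (∀ O : Set unitInterval, IsOpen O → f ⁻¹' O ∈ τ) ∧
      f x = 0 ∧ ∀ y ∈ C, f y = 1

/-- A pseudometric on `X`. -/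
structure IsPseudometric (ρ : X → X → ℝ) : Prop where
  refl : ∀ x, ρ x x = 0
  symm : ∀ x y, ρ x y = ρ y x
  nonneg : ∀ x y, 0 ≤ ρ x y
  triangle : ∀ x y z, ρ x z ≤ ρ x y + ρ y z

/-- A pseudometric `ρ` is pre-uniform with respect to `μ`. -/
def PreUniformPseudometric (μ : Set (Set (X × X))) (ρ : X → X → ℝ) : Prop :=
  ∀ ε : ℝ, 0 < ε → ∃ V ∈ μ, ∀ x y : X, (x, y) ∈ V → ρ x y < ε

/-- A cover of `X` which is pre-uniform with respect to `μ`: some `{V[x] : x ∈ X}` refines it. -/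
def PreUniformCover (μ : Set (Set (X × X))) (𝒜 : Set (Set X)) : Prop :=
  ⋃₀ 𝒜 = Set.univ ∧ ∃ V ∈ μ, ∀ x : X, ∃ A ∈ 𝒜, uball V x ⊆ A

/-- The star `st(A, ℬ)` of a set `A` with respect to a family `ℬ`. -/
def pStar (A : Set X) (ℬ : Set (Set X)) : Set X :=
  ⋃₀ {B | B ∈ ℬ ∧ (B ∩ A).Nonempty}

/-- The star `st(x, 𝒜)` of a point with respect to a family `𝒜`. -/
def pStarPt (x : X) (𝒜 : Set (Set X)) : Set X :=
  ⋃₀ {A | A ∈ 𝒜 ∧ x ∈ A}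

/-- The entourage `⋃ {A × A : A ∈ 𝒜}` associated with a cover `𝒜`. -/
def coverEnt (𝒜 : Set (Set X)) : Set (X × X) := ⋃ A ∈ 𝒜, A ×ˢ A

/-- The family generated by the entourages of the covers in `𝒪`. -/
def coverUnif (𝒪 : Set (Set (Set X))) : Set (Set (X × X)) :=
  {U | ∃ 𝒜 ∈ 𝒪, coverEnt 𝒜 ⊆ U}

/-- The entourage `U_{i,ρ} = {(x,y) : ρ(x,y) < 2⁻ⁱ}` of a pseudometric. -/
def pmEnt (ρ : X → X → ℝ) (i : ℕ) : Set (X × X) :=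
  {p | ρ p.1 p.2 < (1 / 2 : ℝ) ^ i}

/-- The family generated by the entourages `U_{i,ρ}`, `ρ ∈ 𝒟`, `i ∈ ℕ`. -/
def pmUnif (𝒟 : Set (X → X → ℝ)) : Set (Set (X × X)) :=
  {U | ∃ ρ ∈ 𝒟, ∃ i : ℕ, pmEnt ρ i ⊆ U}

/-- A pre-proximity on `X`: a relation `δ` on subsets of `X` satisfying (PP1)-(PP5). -/
structure IsPreProximity (δ : Set X → Set X → Prop) : Prop where
  symm : ∀ A B, δ A B ↔ δ B A
  mono : ∀ A B C, δ A B → B ⊆ C → δ A C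
  point : ∀ x y : X, δ {x} {y} ↔ x = y
  not_empty_univ : ¬ δ ∅ Set.univ
  sep : ∀ A B, ¬ δ A B → ∃ C : Set X, ¬ δ A C ∧ ¬ δ B Cᶜ

/-- The closure operator `c(A) = {x : {x} δ A}` of a pre-proximity. -/
def proxCl (δ : Set X → Set X → Prop) (A : Set X) : Set X := {x | δ {x} A}

/-- The pre-topology induced by a pre-proximity: `U` is open iff `c(X ∖ U) = X ∖ U`. -/
def proxTop (δ : Set X → Set X → Prop) : Set (Set X) :=
  {U | proxCl δ Uᶜ = Uᶜ}

/-- `A ≪ B`, i.e. `B` is a `δ`-neighborhood of `A`: `A δ̄ (X ∖ B)`. -/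
def deltaNbhd (δ : Set X → Set X → Prop) (A B : Set X) : Prop := ¬ δ A Bᶜ

/-- The pre-proximity induced by a pre-uniformity: `A δ_μ B` iff every entourage meets `A × B`. -/
def unifProx (μ : Set (Set (X × X))) (A B : Set X) : Prop :=
  ∀ V ∈ μ, (V ∩ A ×ˢ B).Nonempty

/-- The family generated by the sets `T(A,B) = (X × X) ∖ (A × B)` with `A δ̄ B`. -/
def proxUnif (δ : Set X → Set X → Prop) : Set (Set (X × X)) :=
  {U | ∃ A B : Set X, ¬ δ A B ∧ (A ×ˢ B)ᶜ ⊆ U}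

/-- A pre-uniformity is totally bounded if every entourage admits a finite dense set. -/
def TotallyBoundedPU (μ : Set (Set (X × X))) : Prop :=
  ∀ U ∈ μ, ∃ A : Set X, A.Finite ∧ ∀ x : X, ∃ y ∈ A, (x, y) ∈ U



section MyAux



lemma my_unions_mem {X : Type*} {τ : Set (Set X)} (hτ : IsPreTopology τ) {P : Set X}
    (h : ∀ u ∈ P, ∃ W ∈ τ, u ∈ W ∧ W ⊆ P) : P ∈ τ := by
  have hP : P = ⋃₀ {W | W ∈ τ ∧ W ⊆ P} := by
    apply Set.Subset.antisymm
    · intro u hu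
      obtain ⟨W, hWτ, huW, hWP⟩ := h u hu
      exact ⟨W, ⟨hWτ, hWP⟩, huW⟩
    · rintro u ⟨W, ⟨_, hWP⟩, huW⟩
      exact hWP huW
  rw [hP]
  exact hτ.2 _ (fun W hW => hW.1)


variable {G : Type*} [Group G]

def myDySet (V : ℕ → Set G) : ℕ → ℕ → Set G
  | 0, k => if k = 0 then {1} else V 0
  | n+1, k => if k = 0 then {1} else if k % 2 = 0 then myDySet V n (k/2)
      else myDySet V n (k/2) * V (n+1)

lemma myDySet_zero (V : ℕ → Set G) (n : ℕ) : myDySet V n 0 = {1} := by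
  cases n <;> simp [myDySet]

lemma myDySet_even (V : ℕ → Set G) (n k : ℕ) (hk : k % 2 = 0) :
    myDySet V (n+1) k = myDySet V n (k/2) := by
  rcases eq_or_ne k 0 with rfl | h
  · rw [myDySet_zero, Nat.zero_div, myDySet_zero]
  · simp [myDySet, h, hk]

lemma myDySet_odd (V : ℕ → Set G) (n k : ℕ) (hk : k % 2 = 1) :
    myDySet V (n+1) k = myDySet V n (k/2) * V (n+1) := by
  have h : k ≠ 0 := by omega
  simp [myDySet, h, hk]

lemma myDySet_step {V : ℕ → Set G} (h1 : ∀ n, (1:G) ∈ V n)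
    (hsq : ∀ n, V (n+1) * V (n+1) ⊆ V n) :
    ∀ n k, k < 2^n → myDySet V n k * V n ⊆ myDySet V n (k+1) := by
  intro n
  induction n with
  | zero =>
    intro k hk
    have : k = 0 := by omega
    subst this
    rw [myDySet_zero]
    simp [myDySet]
  | succ n ih =>
    intro k hk
    have hpow : 2^(n+1) = 2 * 2^n := by rw [pow_succ]; ring
    rcases Nat.even_or_odd k with he | ho
    · have hk2 : k % 2 = 0 := Nat.even_iff.1 he
      have hodd : (k+1) % 2 = 1 := by omega
      rw [myDySet_even V n k hk2, myDySet_odd V n (k+1) hodd,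
        show (k+1)/2 = k/2 by omega]
    · have hk2 : k % 2 = 1 := Nat.odd_iff.1 ho
      have heven : (k+1) % 2 = 0 := by omega
      rw [myDySet_odd V n k hk2, myDySet_even V n (k+1) heven,
        show (k+1)/2 = k/2 + 1 by omega, mul_assoc]
      calc myDySet V n (k/2) * (V (n+1) * V (n+1))
          ⊆ myDySet V n (k/2) * V n := Set.mul_subset_mul_left (hsq n)
        _ ⊆ myDySet V n (k/2+1) := ih (k/2) (by omega)

lemma myDySet_succ_subset {V : ℕ → Set G} (h1 : ∀ n, (1:G) ∈ V n)
    (hsq : ∀ n, V (n+1) * V (n+1) ⊆ V n) {n k : ℕ} (hk : k < 2^n) :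
    myDySet V n k ⊆ myDySet V n (k+1) := by
  intro g hg
  have := myDySet_step h1 hsq n k hk (Set.mul_mem_mul hg (h1 n))
  simpa using this

lemma myDySet_mono {V : ℕ → Set G} (h1 : ∀ n, (1:G) ∈ V n)
    (hsq : ∀ n, V (n+1) * V (n+1) ⊆ V n) {n k l : ℕ} (hkl : k ≤ l) (hl : l ≤ 2^n) :
    myDySet V n k ⊆ myDySet V n l := by
  induction l with
  | zero =>
    have : k = 0 := by omega
    subst this; exact subset_rfl
  | succ l ihl =>
    rcases eq_or_lt_of_le hkl with rfl | h
    · exact subset_rfl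
    · exact (ihl (by omega) (by omega)).trans (myDySet_succ_subset h1 hsq (by omega))

lemma myDySet_top (V : ℕ → Set G) (n : ℕ) : myDySet V n (2^n) = V 0 := by
  induction n with
  | zero => simp [myDySet]
  | succ n ih =>
    rw [myDySet_even V n (2^(n+1)) (by rw [pow_succ]; omega),
      show 2^(n+1)/2 = 2^n by rw [pow_succ]; omega]
    exact ih

lemma myDySet_refine (V : ℕ → Set G) : ∀ (i n k : ℕ),
    myDySet V (n+i) (k * 2^i) = myDySet V n k := by
  intro i
  induction i with
  | zero => intro n k; simp
  | succ i ih =>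
    intro n k
    have h2 : k * 2^(i+1) = (k * 2^i) * 2 := by ring
    rw [show n + (i+1) = (n+i)+1 from rfl, h2,
      myDySet_even _ _ _ (by omega), Nat.mul_div_cancel _ (by norm_num)]
    exact ih n k

end MyAux

theorem statement13 {G : Type*} [Group G] (τ : Set (Set G))
    (hτ : IsPreTopology τ)
    (hT1 : IsT1 τ)
    (hmul : ∀ x y : G, ∀ W ∈ τ, x * y ∈ W →
      ∃ U ∈ τ, ∃ V ∈ τ, x ∈ U ∧ y ∈ V ∧ ∀ u ∈ U, ∀ v ∈ V, u * v ∈ W)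
    (hinv : ∀ x : G, ∀ W ∈ τ, x⁻¹ ∈ W → ∃ U ∈ τ, x ∈ U ∧ ∀ u ∈ U, u⁻¹ ∈ W)
    (ℬe : Set (Set G))
    (hb_open : ∀ B ∈ ℬe, B ∈ τ ∧ (1 : G) ∈ B ∧ ∀ g ∈ B, g⁻¹ ∈ B)
    (hb_base : ∀ O ∈ τ, (1 : G) ∈ O → ∃ B ∈ ℬe, B ⊆ O)
    (hb_sq : ∀ U ∈ ℬe, ∃ V ∈ ℬe, ∀ g ∈ V, ∀ h ∈ V, g * h ∈ U) :
    IsCompletelyRegular τ := by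
  refine ⟨hT1, ?_⟩
  intro x C hC hxC
  -- the left translate of Cᶜ is open and contains 1
  set O : Set G := {g | x * g ∈ Cᶜ} with hOdef
  have hO : O ∈ τ := by
    apply my_unions_mem hτ
    intro u hu
    obtain ⟨U, hU, Vt, hVt, hxU, huV, hp⟩ := hmul x u Cᶜ hC hu
    exact ⟨Vt, hVt, huV, fun v hv => hp x hxU v hv⟩
  have h1O : (1:G) ∈ O := by simpa [hOdef] using hxC
  obtain ⟨B0, hB0, hB0O⟩ := hb_base O hO h1O
  -- the decreasing chain of symmetric neighborhoods
  obtain ⟨nf, hnf1, hnf2⟩ : ∃ nf : ∀ U : Set G, U ∈ ℬe → Set G,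
      (∀ U hU, nf U hU ∈ ℬe) ∧ (∀ U hU, ∀ g ∈ nf U hU, ∀ h ∈ nf U hU, g*h ∈ U) := by
    choose nf h1 h2 using hb_sq
    exact ⟨nf, h1, h2⟩
  let Vc : ℕ → {B : Set G // B ∈ ℬe} := fun n =>
    Nat.rec ⟨B0, hB0⟩ (fun _ p => ⟨nf p.1 p.2, hnf1 _ _⟩) n
  set V : ℕ → Set G := fun n => (Vc n).1 with hVdef
  have hVB : ∀ n, V n ∈ ℬe := fun n => (Vc n).2
  have hV0 : V 0 ⊆ O := hB0O
  have hVτ : ∀ n, V n ∈ τ := fun n => (hb_open _ (hVB n)).1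
  have hV1 : ∀ n, (1:G) ∈ V n := fun n => (hb_open _ (hVB n)).2.1
  have hVsym : ∀ n, ∀ g ∈ V n, g⁻¹ ∈ V n := fun n => (hb_open _ (hVB n)).2.2
  have hVsq' : ∀ n, ∀ g ∈ V (n+1), ∀ h ∈ V (n+1), g*h ∈ V n := fun n =>
    hnf2 (Vc n).1 (Vc n).2
  have hVsq : ∀ n, V (n+1) * V (n+1) ⊆ V n := by
    intro n p hp
    obtain ⟨g, hg, h, hh, rfl⟩ := hp
    exact hVsq' n g hg h hh
  have hVanti : ∀ {N M : ℕ}, N ≤ M → V M ⊆ V N := by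
    have hstep : ∀ n, V (n+1) ⊆ V n := fun n g hg => by
      simpa using hVsq' n g hg 1 (hV1 (n+1))
    intro N M h
    induction h with
    | refl => exact subset_rfl
    | step h ih => exact (hstep _).trans ih
  -- the Urysohn-type function
  set S : G → Set ℝ := fun y =>
    {r | r = 1 ∨ ∃ n k : ℕ, k ≤ 2^n ∧ x⁻¹*y ∈ myDySet V n k ∧ r = (k:ℝ)/2^n} with hSdef
  set f : G → ℝ := fun y => sInf (S y) with hfdef
  have hSne : ∀ y, (S y).Nonempty := fun y => ⟨1, Or.inl rfl⟩
  have hSlb : ∀ y, ∀ r ∈ S y, (0:ℝ) ≤ r := by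
    rintro y r (rfl | ⟨n, k, _, _, rfl⟩)
    · norm_num
    · positivity
  have hbdd : ∀ y, BddBelow (S y) := fun y => ⟨0, hSlb y⟩
  have hf0 : ∀ y, 0 ≤ f y := fun y => le_csInf (hSne y) (hSlb y)
  have hf1 : ∀ y, f y ≤ 1 := fun y => csInf_le (hbdd y) (Or.inl rfl)
  -- key estimate
  have key : ∀ (y z : G) (N : ℕ), z ∈ V N → f (y*z) ≤ f y + 2*(1/2:ℝ)^N := by
    intro y z N hz
    have hpos : (0:ℝ) ≤ (1/2:ℝ)^N := by positivity
    have hmain : ∀ r ∈ S y, f (y*z) ≤ r + 2*(1/2:ℝ)^N := by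
      rintro r (rfl | ⟨n, k, hk, hmem, rfl⟩)
      · linarith [hf1 (y*z)]
      · -- lift to level M := max n N
        set M := max n N with hMdef
        set j := M - n with hj
        have hnj : n + j = M := by omega
        set m' := k * 2 ^ j with hm'
        have hmem' : x⁻¹*y ∈ myDySet V M m' := by
          rw [← hnj, myDySet_refine]; exact hmem
        have hm'le : m' ≤ 2^M := by
          calc m' ≤ 2^n * 2^j := Nat.mul_le_mul_right _ hk
            _ = 2^M := by rw [← pow_add, hnj]
        have hpowsplit : (2:ℝ)^M = 2^n * 2^j := by rw [← pow_add, hnj]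
        have hr' : (k:ℝ)/2^n = (m':ℝ)/2^M := by
          rw [hpowsplit, hm']
          push_cast
          have h2n : (2:ℝ)^n ≠ 0 := by positivity
          have h2j : (2:ℝ)^j ≠ 0 := by positivity
          field_simp
        rw [hr']
        -- now work at level N with i := M - N
        set i := M - N with hi
        have hNi : N + i = M := by omega
        have hposi : 0 < 2^i := by positivity
        have h2M : (0:ℝ) < 2^M := by positivity
        have h2N : (0:ℝ) < 2^N := by positivity
        have h2i : (0:ℝ) < 2^i := by positivity
        have hMsplit : (2:ℝ)^M = 2^N * 2^i := by rw [← pow_add, hNi]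
        have hMsplitN : (2:ℕ)^M = 2^N * 2^i := by rw [← pow_add, hNi]
        set m := m' / 2^i + 1 with hm
        have hdivmul : m' / 2^i * 2^i ≤ m' := Nat.div_mul_le_self _ _
        have hm'lt : m' < m * 2^i := by
          have hdm := Nat.div_add_mod m' (2^i)
          have hmod : m' % 2^i < 2^i := Nat.mod_lt _ hposi
          calc m' = 2^i * (m' / 2^i) + m' % 2^i := hdm.symm
            _ < 2^i * (m' / 2^i) + 2^i := Nat.add_lt_add_left hmod _
            _ = m * 2^i := by rw [hm]; ring
        by_cases hcase : m < 2^N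
        · -- apply the step lemma at level N
          have hmle : m * 2^i ≤ 2^M := by
            calc m * 2^i ≤ 2^N * 2^i := Nat.mul_le_mul_right _ (le_of_lt hcase)
              _ = 2^M := hMsplitN.symm
          have hmemN : x⁻¹*y ∈ myDySet V N m := by
            rw [← myDySet_refine V i N m, hNi]
            exact myDySet_mono hV1 hVsq (le_of_lt hm'lt) hmle hmem'
          have hmemz : x⁻¹*(y*z) ∈ myDySet V N (m+1) := by
            rw [← mul_assoc]
            exact myDySet_step hV1 hVsq N m hcase (Set.mul_mem_mul hmemN hz)
          have hrS : ((m+1 : ℕ):ℝ)/2^N ∈ S (y*z) :=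
            Or.inr ⟨N, m+1, by omega, hmemz, rfl⟩
          have hle : f (y*z) ≤ ((m+1:ℕ):ℝ)/2^N := csInf_le (hbdd _) hrS
          have hnat : (m+1) * 2^i ≤ m' + 2*2^i := by
            have heq : (m+1) * 2^i = m'/2^i * 2^i + 2*2^i := by rw [hm]; ring
            rw [heq]
            exact Nat.add_le_add_right hdivmul _
          have hfin : ((m+1:ℕ):ℝ)/2^N ≤ (m':ℝ)/2^M + 2*(1/2:ℝ)^N := by
            have hcast : (((m:ℝ))+1) * 2^i ≤ (m':ℝ) + 2*2^i := by
              exact_mod_cast hnat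
            have h1 : ((m+1:ℕ):ℝ)/2^N = (((m:ℝ)+1) * 2^i)/2^M := by
              rw [hMsplit]
              push_cast
              rw [div_eq_div_iff (by positivity) (by positivity)]
              ring
            have h2 : 2*(1/2:ℝ)^N = (2*2^i)/2^M := by
              rw [hMsplit, div_pow, one_pow]
              rw [mul_one_div, div_eq_div_iff (by positivity) (by positivity)]
              ring
            rw [h1, h2, ← add_div]
            gcongr
          linarith
        · -- r is already within 2^{-N} of 1
          push_neg at hcase
          have hge : (2^N - 1) * 2^i ≤ m' := by
            have h1 : 2^N - 1 ≤ m' / 2^i := Nat.sub_le_of_le_add hcase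
            calc (2^N - 1) * 2^i ≤ m' / 2^i * 2^i := Nat.mul_le_mul_right _ h1
              _ ≤ m' := hdivmul
          have hgeR : ((2:ℝ)^N - 1) * 2^i ≤ (m':ℝ) := by
            have h1 : ((2^N - 1 : ℕ):ℝ) = (2:ℝ)^N - 1 := by
              have : (1:ℕ) ≤ 2^N := Nat.one_le_two_pow
              push_cast [this]
              ring
            calc ((2:ℝ)^N - 1) * 2^i = ((2^N - 1 : ℕ):ℝ) * ((2^i : ℕ):ℝ) := by
                  rw [h1]; push_cast; ring
              _ ≤ (m':ℝ) := by exact_mod_cast hge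
          have hone : (1:ℝ) ≤ (m':ℝ)/2^M + 2*(1/2:ℝ)^N := by
            have h2 : 2*(1/2:ℝ)^N = (2*2^i)/2^M := by
              rw [hMsplit, div_pow, one_pow]
              rw [mul_one_div, div_eq_div_iff (by positivity) (by positivity)]
              ring
            rw [h2, ← add_div, le_div_iff₀ h2M, one_mul]
            have hexp : ((2:ℝ)^N - 1) * 2^i = 2^N*2^i - 2^i := by ring
            rw [hexp] at hgeR
            linarith [hMsplit, h2i]
          linarith [hf1 (y*z), hone]
    have : f (y*z) - 2*(1/2:ℝ)^N ≤ f y :=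
      le_csInf (hSne y) (fun r hr => by linarith [hmain r hr])
    linarith
  have key2 : ∀ (y z : G) (N : ℕ), z ∈ V N → |f (y*z) - f y| ≤ 2*(1/2:ℝ)^N := by
    intro y z N hz
    have h1 := key y z N hz
    have h2 := key (y*z) z⁻¹ N (hVsym N z hz)
    rw [mul_inv_cancel_right] at h2
    rw [abs_le]
    constructor <;> linarith
  -- value at x
  have hfx : f x = 0 := by
    refine le_antisymm ?_ (hf0 x)
    refine csInf_le (hbdd x) (Or.inr ⟨0, 0, by norm_num, ?_, by norm_num⟩)
    rw [myDySet_zero]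
    simp
  -- value on C
  have hfC : ∀ y ∈ C, f y = 1 := by
    intro y hy
    have hSy : S y = {1} := by
      ext r
      simp only [Set.mem_singleton_iff]
      constructor
      · rintro (rfl | ⟨n, k, hk, hmem, rfl⟩)
        · rfl
        · exfalso
          have : x⁻¹*y ∈ V 0 := by
            have h1 := myDySet_mono hV1 hVsq (le_refl k |>.trans hk) le_rfl hmem
            rwa [myDySet_top] at h1
          have : x * (x⁻¹*y) ∈ Cᶜ := hV0 this
          rw [mul_inv_cancel_left] at this
          exact this hy
      · rintro rfl
        exact Or.inl rfl
    rw [hfdef]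
    simp only [hSy]
    exact csInf_singleton 1
  -- assemble
  refine ⟨fun y => ⟨f y, hf0 y, hf1 y⟩, ?_, Subtype.ext hfx, fun y hy => Subtype.ext (hfC y hy)⟩
  intro Oo hOo
  apply my_unions_mem hτ
  intro u hu
  obtain ⟨ε, hε, hball⟩ := Metric.isOpen_iff.1 hOo _ hu
  obtain ⟨N, hN⟩ := exists_pow_lt_of_lt_one (half_pos hε) (by norm_num : (1/2:ℝ) < 1)
  set Wt : Set G := {w | u⁻¹ * w ∈ V N} with hWdef
  have hWτ : Wt ∈ τ := by
    apply my_unions_mem hτ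
    intro w hw
    obtain ⟨A, hA, B, hB, huA, hwB, hp⟩ := hmul u⁻¹ w (V N) (hVτ N) hw
    exact ⟨B, hB, hwB, fun v hv => hp u⁻¹ huA v hv⟩
  refine ⟨Wt, hWτ, ?_, ?_⟩
  · show u⁻¹ * u ∈ V N
    rw [inv_mul_cancel]
    exact hV1 N
  · intro w hw
    have hz : u⁻¹*w ∈ V N := hw
    have hd := key2 u (u⁻¹*w) N hz
    rw [mul_inv_cancel_left] at hd
    apply hball
    rw [Metric.mem_ball, Subtype.dist_eq, Real.dist_eq]
    calc |f w - f u| ≤ 2*(1/2:ℝ)^N := hd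
      _ < ε := by linarith
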